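/- arXiv:1409.3058 — 3 statements merged into one kernel-verified Lean document; each statement's English description precedes it below -/
import Mathlib

section
/- Let η be a quadratic form on a real vector space X. Suppose there is a vector b with η(b) > 0 and a linear functional b* with η negative definite on ker(b*). Then for any two linearly independent vectors u, v with η(u) > 0 and η(v) > 0, the restriction of η to span(u,v) is hyperbolic, i.e. takes both positive and negative values. -/
open MeasureTheory Pointwise Filter Set
noncomputable section
abbrev E2 := EuclideanSpace ℝ (Fin 2)
def mS (U : Set E2) : ℝ := (volume U).toReal
def InCone (U : Set E2) : Prop := U.Nonempty ∧ IsCompact U ∧ Convex ℝ U ∧ U = -U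
def seg (v : E2) (d : ℝ) : Set E2 := (fun t : ℝ => t • v) '' Set.Icc (-d) d
def perp (v : E2) : E2 := (WithLp.equiv 2 (Fin 2 → ℝ)).symm ![-(v 1), v 0]
def widthHalf (U : Set E2) (v : E2) : ℝ := sSup ((fun x => (inner ℝ x (perp v) : ℝ)) '' U)
def perim (U : Set E2) : ℝ :=
  limUnder (nhdsWithin 0 (Set.Ioi 0))
    (fun t : ℝ => (mS (U + t • Metric.closedBall (0 : E2) 1) - mS U - t ^ 2 * Real.pi) / t)
def Mpair (A B : Set E2) : ℝ := (mS (A + B) - mS A - mS B) / 2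
def Psi (U V : Set E2) : ℝ := 2 * mS U + 2 * mS V - mS (U + V)

/-- If a quadratic form `η(x) = N(x,x)` is positive on some vector `b` and negative definite
on the kernel of a linear functional, then it is hyperbolic on every plane spanned by linearly
independent `u`, `v` with `η(u) > 0` or `η(v) > 0`. -/
theorem quadratic_form_hyperbolic_on_planes
    (X : Type*) [AddCommGroup X] [Module ℝ X]
    (N : X →ₗ[ℝ] X →ₗ[ℝ] ℝ) (hsym : ∀ x y : X, N x y = N y x)
    (b : X) (hb : 0 < N b b)
    (f : X →ₗ[ℝ] ℝ) (hneg : ∀ x : X, f x = 0 → x ≠ 0 → N x x < 0) :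
    ∀ u v : X, LinearIndependent ℝ ![u, v] → (0 < N u u ∨ 0 < N v v) →
      (∃ w ∈ Submodule.span ℝ ({u, v} : Set X), 0 < N w w) ∧
      (∃ w ∈ Submodule.span ℝ ({u, v} : Set X), N w w < 0) := by
  intro u v hli hpos
  have hu : u ∈ Submodule.span ℝ ({u, v} : Set X) :=
    Submodule.subset_span (by simp)
  have hv : v ∈ Submodule.span ℝ ({u, v} : Set X) :=
    Submodule.subset_span (by simp)
  constructor
  · rcases hpos with h | h
    · exact ⟨u, hu, h⟩
    · exact ⟨v, hv, h⟩
  · -- negative vector: w = f v • u - f u • v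
    by_cases h0 : f u = 0 ∧ f v = 0
    · -- then both N u u < 0 and N v v < 0, contradicting hpos
      have hu0 : u ≠ 0 := by
        intro h; exact one_ne_zero ((LinearIndependent.pair_iff.mp hli 1 0 (by simp [h])).1)
      have hv0 : v ≠ 0 := by
        intro h; exact one_ne_zero ((LinearIndependent.pair_iff.mp hli 0 1 (by simp [h])).2)
      have := hneg u h0.1 hu0
      have := hneg v h0.2 hv0
      rcases hpos with h | h <;> linarith
    · set w := f v • u - f u • v with hw
      have hwmem : w ∈ Submodule.span ℝ ({u, v} : Set X) :=
        Submodule.sub_mem _ (Submodule.smul_mem _ _ hu) (Submodule.smul_mem _ _ hv)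
      have hfw : f w = 0 := by simp [hw, mul_comm]
      have hwne : w ≠ 0 := by
        intro h
        have := LinearIndependent.pair_iff.mp hli (f v) (-(f u)) (by
          rw [neg_smul, ← sub_eq_add_neg]; exact h)
        exact h0 ⟨by simpa using this.2, this.1⟩
      exact ⟨w, hwmem, hneg w hfw hwne⟩
end
end

section
/- For compact convex centrally symmetric planar sets x, y with m*(x) > 0 and m*(y) > 0 as elements of X_S (in particular for sets in S), the inequality (½(m(x+y) − m(x) − m(y)))² ≥ m(x)·m(y) holds; for actual convex bodies this is equivalent to the Brunn–Minkowski inequality √(m(x+y)) ≥ √(m(x)) + √(m(y)). -/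
open MeasureTheory Pointwise Filter Set
noncomputable section
open Bornology

lemma oneDimBM {A B : Set ℝ} (hAc : Convex ℝ A) (hBc : Convex ℝ B)
    (hA : A.Nonempty) (hB : B.Nonempty) (hAb : IsBounded A) (hBb : IsBounded B) :
    volume A + volume B ≤ volume (A + B) := by
  have hAba := hAb.bddAbove; have hAbb := hAb.bddBelow
  have hBba := hBb.bddAbove; have hBbb := hBb.bddBelow
  have hA1 : volume A ≤ ENNReal.ofReal (sSup A - sInf A) := by
    rw [← Real.volume_Icc]
    exact measure_mono (fun x hx => ⟨csInf_le hAbb hx, le_csSup hAba hx⟩)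
  have hB1 : volume B ≤ ENNReal.ofReal (sSup B - sInf B) := by
    rw [← Real.volume_Icc]
    exact measure_mono (fun x hx => ⟨csInf_le hBbb hx, le_csSup hBba hx⟩)
  have hsub : Ioo (sInf A + sInf B) (sSup A + sSup B) ⊆ A + B := by
    intro x hx
    obtain ⟨hx1, hx2⟩ := hx
    obtain ⟨a, ha, ha'⟩ := Real.lt_sInf_add_pos hA (by linarith : (0:ℝ) < (x - sInf A - sInf B)/2)
    obtain ⟨b, hb, hb'⟩ := Real.lt_sInf_add_pos hB (by linarith : (0:ℝ) < (x - sInf A - sInf B)/2)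
    obtain ⟨a', ha2, ha2'⟩ := Real.add_neg_lt_sSup hA
      (by linarith : -((sSup A + sSup B - x)/2) < 0)
    obtain ⟨b', hb2, hb2'⟩ := Real.add_neg_lt_sSup hB
      (by linarith : -((sSup A + sSup B - x)/2) < 0)
    have h1 : a + b < x := by linarith
    have h2 : x < a' + b' := by linarith
    have hconv : Convex ℝ (A + B) := hAc.add hBc
    exact hconv.ordConnected.out (add_mem_add ha hb) (add_mem_add ha2 hb2)
      ⟨h1.le, h2.le⟩
  calc volume A + volume B ≤ ENNReal.ofReal (sSup A - sInf A) + ENNReal.ofReal (sSup B - sInf B) :=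
        add_le_add hA1 hB1
    _ = ENNReal.ofReal ((sSup A + sSup B) - (sInf A + sInf B)) := by
        rw [← ENNReal.ofReal_add (by linarith [csInf_le_csSup hA hAbb hAba])
          (by linarith [csInf_le_csSup hB hBbb hBba])]
        ring_nf
    _ = volume (Ioo (sInf A + sInf B) (sSup A + sSup B)) := (Real.volume_Ioo).symm
    _ ≤ volume (A + B) := measure_mono hsub

lemma oneDimSmul (c : ℝ) (hc : 0 ≤ c) (A : Set ℝ) :
    volume (c • A) = ENNReal.ofReal c * volume A := by
  rw [Measure.addHaar_smul_of_nonneg volume hc A]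
  simp

lemma sec_convex {S : Set (ℝ × ℝ)} (hS : Convex ℝ S) (s : ℝ) :
    Convex ℝ (Prod.mk s ⁻¹' S) := by
  intro y₁ h₁ y₂ h₂ p q hp hq hpq
  have hmem := hS h₁ h₂ hp hq hpq
  have he : p • (s, y₁) + q • (s, y₂) = (s, p • y₁ + q • y₂) := by
    have : p * s + q * s = s := by linear_combination s * hpq
    simp [Prod.ext_iff, smul_eq_mul, this]
  rwa [he] at hmem

lemma sec_subset_Icc {S : Set (ℝ × ℝ)} {R : ℝ} (hR : S ⊆ Metric.closedBall 0 R) (s : ℝ) :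
    Prod.mk s ⁻¹' S ⊆ Icc (-R) R := by
  intro y hy
  have h1 := hR hy
  rw [Metric.mem_closedBall, dist_zero_right] at h1
  have h2 : |y| ≤ R := le_trans (by simpa using norm_snd_le ((s, y) : ℝ × ℝ)) h1
  exact abs_le.mp h2

lemma sec_vol_le {S : Set (ℝ × ℝ)} {R : ℝ} (hR : S ⊆ Metric.closedBall 0 R) (s : ℝ) :
    volume (Prod.mk s ⁻¹' S) ≤ ENNReal.ofReal (R + R) := by
  calc volume (Prod.mk s ⁻¹' S) ≤ volume (Icc (-R) R) := measure_mono (sec_subset_Icc hR s)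
    _ = ENNReal.ofReal (R - -R) := Real.volume_Icc
    _ = ENNReal.ofReal (R + R) := by ring_nf

lemma sec_vol_ne_top {S : Set (ℝ × ℝ)} {R : ℝ} (hR : S ⊆ Metric.closedBall 0 R) (s : ℝ) :
    volume (Prod.mk s ⁻¹' S) ≠ ⊤ :=
  ((sec_vol_le hR s).trans_lt ENNReal.ofReal_lt_top).ne

/-- sections of the sum contain sums of sections -/
lemma sec_add {A B : Set (ℝ × ℝ)} (s t : ℝ) :
    Prod.mk s ⁻¹' A + Prod.mk t ⁻¹' B ⊆ Prod.mk (s + t) ⁻¹' (A + B) := by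
  rintro z ⟨y₁, h₁, y₂, h₂, rfl⟩
  exact ⟨(s, y₁), h₁, (t, y₂), h₂, rfl⟩

/-- superlevel sets of the slice function are convex -/
lemma superlevel_convex {S : Set (ℝ × ℝ)} (hS : Convex ℝ S) {R : ℝ}
    (hR : S ⊆ Metric.closedBall 0 R) {μ : ℝ} (hμ : 0 ≤ μ) :
    Convex ℝ {s : ℝ | μ < (volume (Prod.mk s ⁻¹' S)).toReal} := by
  intro s₁ h₁ s₂ h₂ p q hp hq hpq
  rcases eq_or_lt_of_le hp with rfl | hp'
  · have : q = 1 := by linarith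
    simpa [this] using h₂
  rcases eq_or_lt_of_le hq with rfl | hq'
  · have : p = 1 := by linarith
    simpa [this] using h₁
  simp only [mem_setOf_eq] at h₁ h₂ ⊢
  set C := Prod.mk s₁ ⁻¹' S with hC
  set D := Prod.mk s₂ ⁻¹' S with hD
  have hCne : C.Nonempty := by
    apply nonempty_of_measure_ne_zero (μ := volume)
    intro h0; rw [h0] at h₁; simp at h₁; linarith
  have hDne : D.Nonempty := by
    apply nonempty_of_measure_ne_zero (μ := volume)
    intro h0; rw [h0] at h₂; simp at h₂; linarith
  have hCb : IsBounded C := (Metric.isBounded_Icc (-R) R).subset (sec_subset_Icc hR s₁)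
  have hDb : IsBounded D := (Metric.isBounded_Icc (-R) R).subset (sec_subset_Icc hR s₂)
  have hsub : p • C + q • D ⊆ Prod.mk (p • s₁ + q • s₂) ⁻¹' S := by
    rintro z ⟨y₁, ⟨w₁, hw₁, rfl⟩, y₂, ⟨w₂, hw₂, rfl⟩, rfl⟩
    have := hS hw₁ hw₂ hp hq hpq
    exact this
  have key : ENNReal.ofReal p * volume C + ENNReal.ofReal q * volume D
      ≤ volume (Prod.mk (p • s₁ + q • s₂) ⁻¹' S) := by
    calc ENNReal.ofReal p * volume C + ENNReal.ofReal q * volume D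
        = volume (p • C) + volume (q • D) := by
          rw [oneDimSmul p hp C, oneDimSmul q hq D]
      _ ≤ volume (p • C + q • D) :=
          oneDimBM ((sec_convex hS s₁).smul p) ((sec_convex hS s₂).smul q)
            (hCne.smul_set) (hDne.smul_set) (hCb.smul₀ p) (hDb.smul₀ q)
      _ ≤ _ := measure_mono hsub
  have hfin : volume (Prod.mk (p • s₁ + q • s₂) ⁻¹' S) ≠ ⊤ := sec_vol_ne_top hR _
  have h3 : p * (volume C).toReal + q * (volume D).toReal
      ≤ (volume (Prod.mk (p • s₁ + q • s₂) ⁻¹' S)).toReal := by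
    have := ENNReal.toReal_mono hfin key
    rwa [ENNReal.toReal_add (by
        exact ENNReal.mul_ne_top ENNReal.ofReal_ne_top (sec_vol_ne_top hR s₁)) (by
        exact ENNReal.mul_ne_top ENNReal.ofReal_ne_top (sec_vol_ne_top hR s₂)),
      ENNReal.toReal_mul, ENNReal.toReal_mul, ENNReal.toReal_ofReal hp,
      ENNReal.toReal_ofReal hq] at this
  have h4 : μ < p * (volume C).toReal + q * (volume D).toReal := by
    have := mul_lt_mul_of_pos_left h₁ hp'
    have := mul_lt_mul_of_pos_left h₂ hq'
    nlinarith
  linarith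

lemma planeBM {A B : Set (ℝ × ℝ)} (hAcv : Convex ℝ A) (hBcv : Convex ℝ B)
    (hAcp : IsCompact A) (hBcp : IsCompact B)
    (hA0 : 0 < volume A) (hB0 : 0 < volume B) :
    (volume A).toReal + (volume B).toReal
      + 2 * Real.sqrt ((volume A).toReal * (volume B).toReal)
      ≤ (volume (A + B)).toReal := by
  have hAne : A.Nonempty := nonempty_of_measure_ne_zero hA0.ne'
  have hBne : B.Nonempty := nonempty_of_measure_ne_zero hB0.ne'
  obtain ⟨RA, hRA⟩ := hAcp.isBounded.subset_closedBall 0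
  have hRA0 : 0 ≤ RA := by
    obtain ⟨x, hx⟩ := hAne
    exact le_trans dist_nonneg (Metric.mem_closedBall.mp (hRA hx))
  obtain ⟨RB, hRB⟩ := hBcp.isBounded.subset_closedBall 0
  have hRB0 : 0 ≤ RB := by
    obtain ⟨x, hx⟩ := hBne
    exact le_trans dist_nonneg (Metric.mem_closedBall.mp (hRB hx))
  have hCcp : IsCompact (A + B) := hAcp.add hBcp
  obtain ⟨RC, hRC⟩ := hCcp.isBounded.subset_closedBall 0
  have hAm : MeasurableSet A := hAcp.measurableSet
  have hBm : MeasurableSet B := hBcp.measurableSet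
  have hCm : MeasurableSet (A + B) := hCcp.measurableSet
  set f : ℝ → ℝ := fun s => (volume (Prod.mk s ⁻¹' A)).toReal with hf
  set g : ℝ → ℝ := fun s => (volume (Prod.mk s ⁻¹' B)).toReal with hg
  set h : ℝ → ℝ := fun s => (volume (Prod.mk s ⁻¹' (A + B))).toReal with hh
  have hfm : Measurable f := (measurable_measure_prodMk_left hAm).ennreal_toReal
  have hgm : Measurable g := (measurable_measure_prodMk_left hBm).ennreal_toReal
  have hhm : Measurable h := (measurable_measure_prodMk_left hCm).ennreal_toReal
  have hfnn : ∀ s, 0 ≤ f s := fun s => ENNReal.toReal_nonneg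
  have hgnn : ∀ s, 0 ≤ g s := fun s => ENNReal.toReal_nonneg
  have hhnn : ∀ s, 0 ≤ h s := fun s => ENNReal.toReal_nonneg
  -- Fubini
  have hvol : ∀ (S : Set (ℝ × ℝ)), MeasurableSet S → ∀ R, S ⊆ Metric.closedBall 0 R →
      volume S = ∫⁻ s, ENNReal.ofReal ((volume (Prod.mk s ⁻¹' S)).toReal) := by
    intro S hSm R hR
    rw [Measure.volume_eq_prod, Measure.prod_apply hSm]
    exact lintegral_congr fun s => (ENNReal.ofReal_toReal (sec_vol_ne_top hR s)).symm
  have hvolA : volume A = ∫⁻ s, ENNReal.ofReal (f s) := hvol A hAm RA hRA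
  have hvolB : volume B = ∫⁻ s, ENNReal.ofReal (g s) := hvol B hBm RB hRB
  have hvolC : volume (A + B) = ∫⁻ s, ENNReal.ofReal (h s) := hvol (A + B) hCm RC hRC
  -- sup of slice functions
  have hfub : ∀ s, f s ≤ RA + RA := by
    intro s
    have := ENNReal.toReal_mono ENNReal.ofReal_ne_top (sec_vol_le hRA s)
    rwa [ENNReal.toReal_ofReal (by linarith)] at this
  have hgub : ∀ s, g s ≤ RB + RB := by
    intro s
    have := ENNReal.toReal_mono ENNReal.ofReal_ne_top (sec_vol_le hRB s)
    rwa [ENNReal.toReal_ofReal (by linarith)] at this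
  set F : ℝ := sSup (range f) with hF
  set G : ℝ := sSup (range g) with hG
  have hFba : BddAbove (range f) := ⟨RA + RA, by rintro x ⟨s, rfl⟩; exact hfub s⟩
  have hGba : BddAbove (range g) := ⟨RB + RB, by rintro x ⟨s, rfl⟩; exact hgub s⟩
  have hfleF : ∀ s, f s ≤ F := fun s => le_csSup hFba (mem_range_self s)
  have hgleG : ∀ s, g s ≤ G := fun s => le_csSup hGba (mem_range_self s)
  have hF0 : 0 < F := by
    by_contra hc
    push_neg at hc
    have : ∀ s, f s = 0 := fun s => le_antisymm ((hfleF s).trans hc) (hfnn s)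
    have : volume A = 0 := by
      rw [hvolA]
      simp [this]
    exact absurd this hA0.ne'
  have hG0 : 0 < G := by
    by_contra hc
    push_neg at hc
    have : ∀ s, g s = 0 := fun s => le_antisymm ((hgleG s).trans hc) (hgnn s)
    have : volume B = 0 := by
      rw [hvolB]
      simp [this]
    exact absurd this hB0.ne'
  have hFG0 : 0 < F + G := by linarith
  set c : ℝ := F + G with hc
  set α : ℝ := F / (F + G) with hα
  set β : ℝ := G / (F + G) with hβ
  have hα0 : 0 < α := div_pos hF0 hFG0
  have hβ0 : 0 < β := div_pos hG0 hFG0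
  have hαc : α * c = F := by rw [hα, hc]; field_simp
  have hβc : β * c = G := by rw [hβ, hc]; field_simp
  have hαβ : α + β = 1 := by rw [hα, hβ]; field_simp
  -- superlevel sets antitone in λ, hence the measure functions are measurable
  have hanti : ∀ (φ : ℝ → ℝ) (γ : ℝ), 0 < γ →
      Antitone (fun l : ℝ => volume {s : ℝ | γ * l < φ s}) := by
    intro φ γ hγ l₁ l₂ hl
    exact measure_mono (fun s hs => lt_of_le_of_lt (by
      exact mul_le_mul_of_nonneg_left hl hγ.le) hs)
  -- layer cake computation for f/α and g/β
  have hlayer : ∀ (φ : ℝ → ℝ), Measurable φ → (∀ s, 0 ≤ φ s) → ∀ γ : ℝ, 0 < γ →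
      ∫⁻ l in Ioi 0, volume {s : ℝ | γ * l < φ s}
        = ENNReal.ofReal γ⁻¹ * ∫⁻ s, ENNReal.ofReal (φ s) := by
    intro φ hφm hφnn γ hγ
    have h1 : ∀ l : ℝ, {s : ℝ | γ * l < φ s} = {s : ℝ | l < φ s * γ⁻¹} := by
      intro l
      ext s
      simp only [mem_setOf_eq]
      rw [mul_comm, ← lt_div_iff₀ hγ, div_eq_mul_inv]
    calc ∫⁻ l in Ioi 0, volume {s : ℝ | γ * l < φ s}
        = ∫⁻ l in Ioi 0, volume {s : ℝ | l < φ s * γ⁻¹} := by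
          congr 1; ext l; rw [h1 l]
      _ = ∫⁻ s, ENNReal.ofReal (φ s * γ⁻¹) := by
          rw [← lintegral_eq_lintegral_meas_lt volume
            (ae_of_all _ (fun s => mul_nonneg (hφnn s) (inv_nonneg.mpr hγ.le)))
            ((hφm.mul_const γ⁻¹).aemeasurable)]
      _ = ENNReal.ofReal γ⁻¹ * ∫⁻ s, ENNReal.ofReal (φ s) := by
          rw [← lintegral_const_mul _ (by
            exact hφm.ennreal_ofReal)]
          congr 1; ext s
          rw [ENNReal.ofReal_mul (hφnn s), mul_comm]
  -- truncation
  have hc0 : 0 < c := hFG0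
  have htrunc : ∀ (φ : ℝ → ℝ) (γ M : ℝ), 0 < γ → (∀ s, φ s ≤ M) → γ * c = M →
      ∫⁻ l in Ioi 0, volume {s : ℝ | γ * l < φ s}
        = ∫⁻ l in Ioo 0 c, volume {s : ℝ | γ * l < φ s} := by
    intro φ γ M hγ hub hM
    have hd : Disjoint (Ioo 0 c) (Ici c) := by
      rw [Set.disjoint_left]
      intro l hl hl'
      exact absurd hl.2 (not_lt.mpr hl')
    rw [← Ioo_union_Ici_eq_Ioi hc0, lintegral_union measurableSet_Ici hd]
    have hzero : ∀ l ∈ Ici c, volume {s : ℝ | γ * l < φ s} = (fun _ : ℝ => (0:ENNReal)) l := by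
      intro l hl
      have hempty : {s : ℝ | γ * l < φ s} = ∅ := by
        apply eq_empty_iff_forall_notMem.mpr
        intro s hs
        have h1 : φ s ≤ γ * l := (hub s).trans (hM ▸ mul_le_mul_of_nonneg_left hl hγ.le)
        exact absurd hs (not_lt.mpr h1)
      rw [hempty, measure_empty]
    rw [setLIntegral_congr_fun measurableSet_Ici hzero, lintegral_zero, add_zero]
  -- main chain in ℝ≥0∞
  have hmain : ENNReal.ofReal α⁻¹ * volume A + ENNReal.ofReal β⁻¹ * volume B
      ≤ volume (A + B) := by
    have hfmeas : Measurable (fun l : ℝ => volume {s : ℝ | α * l < f s}) :=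
      (hanti f α hα0).measurable
    calc ENNReal.ofReal α⁻¹ * volume A + ENNReal.ofReal β⁻¹ * volume B
        = (∫⁻ l in Ioi 0, volume {s : ℝ | α * l < f s})
          + (∫⁻ l in Ioi 0, volume {t : ℝ | β * l < g t}) := by
          rw [hlayer f hfm hfnn α hα0, hlayer g hgm hgnn β hβ0, ← hvolA, ← hvolB]
      _ = (∫⁻ l in Ioo 0 c, volume {s : ℝ | α * l < f s})
          + (∫⁻ l in Ioo 0 c, volume {t : ℝ | β * l < g t}) := by
          rw [htrunc f α F hα0 hfleF hαc, htrunc g β G hβ0 hgleG hβc]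
      _ = ∫⁻ l in Ioo 0 c,
            (volume {s : ℝ | α * l < f s} + volume {t : ℝ | β * l < g t}) :=
          (lintegral_add_left hfmeas _).symm
      _ ≤ ∫⁻ l in Ioo 0 c, volume {r : ℝ | l < h r} := by
          apply setLIntegral_mono' measurableSet_Ioo
          intro l hl
          obtain ⟨hl0, hlc⟩ := hl
          have hαl : 0 < α * l := mul_pos hα0 hl0
          have hβl : 0 < β * l := mul_pos hβ0 hl0
          have hsecAne : ∀ s : ℝ, 0 < f s → (Prod.mk s ⁻¹' A).Nonempty := by
            intro s hs
            apply nonempty_of_measure_ne_zero (μ := volume)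
            intro h0
            rw [show f s = (volume (Prod.mk s ⁻¹' A)).toReal from rfl, h0] at hs
            simp at hs
          have hsecBne : ∀ t : ℝ, 0 < g t → (Prod.mk t ⁻¹' B).Nonempty := by
            intro t ht
            apply nonempty_of_measure_ne_zero (μ := volume)
            intro h0
            rw [show g t = (volume (Prod.mk t ⁻¹' B)).toReal from rfl, h0] at ht
            simp at ht
          have hFne : {s : ℝ | α * l < f s}.Nonempty := by
            have hlt : α * l < F := hαc ▸ mul_lt_mul_of_pos_left hlc hα0
            obtain ⟨y, ⟨s, rfl⟩, hy⟩ :=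
              exists_lt_of_lt_csSup ⟨f 0, mem_range_self 0⟩ hlt
            exact ⟨s, hy⟩
          have hGne : {t : ℝ | β * l < g t}.Nonempty := by
            have hlt : β * l < G := hβc ▸ mul_lt_mul_of_pos_left hlc hβ0
            obtain ⟨y, ⟨t, rfl⟩, hy⟩ :=
              exists_lt_of_lt_csSup ⟨g 0, mem_range_self 0⟩ hlt
            exact ⟨t, hy⟩
          have hLfb : IsBounded {s : ℝ | α * l < f s} := by
            apply (Metric.isBounded_Icc (-RA) RA).subset
            intro s hs
            obtain ⟨y, hy⟩ := hsecAne s (lt_trans hαl hs)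
            have h1 := hRA hy
            rw [Metric.mem_closedBall, dist_zero_right] at h1
            exact abs_le.mp (le_trans (by simpa using norm_fst_le ((s, y) : ℝ × ℝ)) h1)
          have hLgb : IsBounded {t : ℝ | β * l < g t} := by
            apply (Metric.isBounded_Icc (-RB) RB).subset
            intro t ht
            obtain ⟨y, hy⟩ := hsecBne t (lt_trans hβl ht)
            have h1 := hRB hy
            rw [Metric.mem_closedBall, dist_zero_right] at h1
            exact abs_le.mp (le_trans (by simpa using norm_fst_le ((t, y) : ℝ × ℝ)) h1)
          have hLfc : Convex ℝ {s : ℝ | α * l < f s} := superlevel_convex hAcv hRA hαl.le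
          have hLgc : Convex ℝ {t : ℝ | β * l < g t} := superlevel_convex hBcv hRB hβl.le
          have hincl : {s : ℝ | α * l < f s} + {t : ℝ | β * l < g t}
              ⊆ {r : ℝ | l < h r} := by
            rintro r ⟨s, hs, t, ht, rfl⟩
            simp only [mem_setOf_eq] at hs ht ⊢
            have hkey : volume (Prod.mk s ⁻¹' A) + volume (Prod.mk t ⁻¹' B)
                ≤ volume (Prod.mk (s + t) ⁻¹' (A + B)) :=
              le_trans (oneDimBM (sec_convex hAcv s) (sec_convex hBcv t)
                (hsecAne s (lt_trans hαl hs)) (hsecBne t (lt_trans hβl ht))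
                ((Metric.isBounded_Icc (-RA) RA).subset (sec_subset_Icc hRA s))
                ((Metric.isBounded_Icc (-RB) RB).subset (sec_subset_Icc hRB t)))
                (measure_mono (sec_add s t))
            have h2 := ENNReal.toReal_mono (sec_vol_ne_top hRC (s + t)) hkey
            rw [ENNReal.toReal_add (sec_vol_ne_top hRA s) (sec_vol_ne_top hRB t)] at h2
            have hsum : α * l + β * l = l := by linear_combination l * hαβ
            calc l = α * l + β * l := hsum.symm
              _ < f s + g t := add_lt_add hs ht
              _ ≤ h (s + t) := h2
          calc volume {s : ℝ | α * l < f s} + volume {t : ℝ | β * l < g t}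
              ≤ volume ({s : ℝ | α * l < f s} + {t : ℝ | β * l < g t}) :=
                oneDimBM hLfc hLgc hFne hGne hLfb hLgb
            _ ≤ volume {r : ℝ | l < h r} := measure_mono hincl
      _ ≤ ∫⁻ l in Ioi 0, volume {r : ℝ | l < h r} :=
          lintegral_mono_set Ioo_subset_Ioi_self
      _ = volume (A + B) := by
          rw [← lintegral_eq_lintegral_meas_lt volume (ae_of_all _ hhnn) hhm.aemeasurable,
            ← hvolC]
  -- conclude in ℝ
  have hCfin : volume (A + B) ≠ ⊤ := hCcp.measure_lt_top.ne
  have hAfin : volume A ≠ ⊤ := hAcp.measure_lt_top.ne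
  have hBfin : volume B ≠ ⊤ := hBcp.measure_lt_top.ne
  have hre := ENNReal.toReal_mono hCfin hmain
  rw [ENNReal.toReal_add (ENNReal.mul_ne_top ENNReal.ofReal_ne_top hAfin)
      (ENNReal.mul_ne_top ENNReal.ofReal_ne_top hBfin),
    ENNReal.toReal_mul, ENNReal.toReal_mul,
    ENNReal.toReal_ofReal (inv_nonneg.mpr hα0.le),
    ENNReal.toReal_ofReal (inv_nonneg.mpr hβ0.le)] at hre
  have ha0 : 0 < (volume A).toReal := ENNReal.toReal_pos hA0.ne' hAfin
  have hb0 : 0 < (volume B).toReal := ENNReal.toReal_pos hB0.ne' hBfin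
  set a := (volume A).toReal
  set b := (volume B).toReal
  have e1 : α⁻¹ * a + β⁻¹ * b = a + b + (G / F) * a + (F / G) * b := by
    rw [hα, hβ]
    field_simp
    ring
  have hx0 : 0 < (G / F) * a := mul_pos (div_pos hG0 hF0) ha0
  have hy0 : 0 < (F / G) * b := mul_pos (div_pos hF0 hG0) hb0
  have hxy : (G / F) * a * ((F / G) * b) = a * b := by
    field_simp
  have hsq : Real.sqrt (a * b) = Real.sqrt ((G / F) * a) * Real.sqrt ((F / G) * b) := by
    rw [← Real.sqrt_mul hx0.le, hxy]
  have hamgm : 2 * Real.sqrt (a * b) ≤ (G / F) * a + (F / G) * b := by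
    nlinarith [sq_nonneg (Real.sqrt ((G / F) * a) - Real.sqrt ((F / G) * b)),
      Real.sq_sqrt hx0.le, Real.sq_sqrt hy0.le]
  linarith

section Transfer

/-- The coordinate equivalence from the Euclidean plane to `ℝ × ℝ`. -/
def psiEquiv : E2 ≃ᵐ (ℝ × ℝ) :=
  (MeasurableEquiv.toLp 2 (Fin 2 → ℝ)).symm.trans MeasurableEquiv.finTwoArrow

lemma psi_mp : MeasurePreserving (⇑psiEquiv) volume volume :=
  (volume_preserving_finTwoArrow ℝ).comp
    (EuclideanSpace.volume_preserving_symm_measurableEquiv_toLp (Fin 2))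

lemma psi_image_vol (S : Set E2) : volume (psiEquiv '' S) = volume S := by
  rw [MeasurableEquiv.image_eq_preimage_symm]
  exact (psi_mp.symm psiEquiv).measure_preimage_equiv S

lemma psi_linear : IsLinearMap ℝ (⇑psiEquiv) := ⟨fun x y => rfl, fun c x => rfl⟩

lemma psi_continuous : Continuous (⇑psiEquiv) := by
  have he : (⇑psiEquiv : E2 → ℝ × ℝ) = fun x =>
      ((EuclideanSpace.proj (0 : Fin 2)) x, (EuclideanSpace.proj (1 : Fin 2)) x) := rfl
  rw [he]
  exact (EuclideanSpace.proj (0 : Fin 2)).continuous.prodMk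
    (EuclideanSpace.proj (1 : Fin 2)).continuous

lemma psi_image_add (S T : Set E2) :
    psiEquiv '' (S + T) = psiEquiv '' S + psiEquiv '' T := by
  ext z
  constructor
  · rintro ⟨w, ⟨x, hx, y, hy, rfl⟩, rfl⟩
    exact ⟨psiEquiv x, mem_image_of_mem _ hx, psiEquiv y, mem_image_of_mem _ hy, rfl⟩
  · rintro ⟨w1, ⟨x, hx, rfl⟩, w2, ⟨y, hy, rfl⟩, rfl⟩
    exact ⟨x + y, ⟨x, hx, y, hy, rfl⟩, rfl⟩

end Transfer

/-- Brunn–Minkowski for compact convex sets in the Euclidean plane `E2`. -/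
lemma e2BM {U V : Set E2} (hUcv : Convex ℝ U) (hVcv : Convex ℝ V)
    (hUcp : IsCompact U) (hVcp : IsCompact V) (hmU : 0 < mS U) (hmV : 0 < mS V) :
    mS U + mS V + 2 * Real.sqrt (mS U * mS V) ≤ mS (U + V) := by
  have hU0 : 0 < volume (psiEquiv '' U) := by
    rw [psi_image_vol]
    rcases eq_or_lt_of_le (show (0:ENNReal) ≤ volume U from zero_le) with h | h
    · exfalso
      rw [mS, ← h] at hmU
      simp at hmU
    · exact h
  have hV0 : 0 < volume (psiEquiv '' V) := by
    rw [psi_image_vol]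
    rcases eq_or_lt_of_le (show (0:ENNReal) ≤ volume V from zero_le) with h | h
    · exfalso
      rw [mS, ← h] at hmV
      simp at hmV
    · exact h
  have key := planeBM (hUcv.is_linear_image psi_linear) (hVcv.is_linear_image psi_linear)
    (hUcp.image psi_continuous) (hVcp.image psi_continuous) hU0 hV0
  rw [← psi_image_add, psi_image_vol, psi_image_vol, psi_image_vol] at key
  exact key

/-- The generalized Brunn-Minkowski inequality for sets in the cone with positive measure,
and its equivalence with the classical Brunn-Minkowski inequality. -/
theorem generalized_brunn_minkowski (U V : Set E2)
    (hU : InCone U) (hV : InCone V) (hmU : 0 < mS U) (hmV : 0 < mS V) :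
    ((mS (U + V) - mS U - mS V) / 2) ^ 2 ≥ mS U * mS V ∧
    (((mS (U + V) - mS U - mS V) / 2) ^ 2 ≥ mS U * mS V ↔
      Real.sqrt (mS (U + V)) ≥ Real.sqrt (mS U) + Real.sqrt (mS V)) := by
  obtain ⟨hUne, hUcp, hUcv, -⟩ := hU
  obtain ⟨hVne, hVcp, hVcv, -⟩ := hV
  have key : mS U + mS V + 2 * Real.sqrt (mS U * mS V) ≤ mS (U + V) :=
    e2BM hUcv hVcv hUcp hVcp hmU hmV
  have hab : 0 ≤ mS U * mS V := by positivity
  have hsq : Real.sqrt (mS U * mS V) ^ 2 = mS U * mS V := Real.sq_sqrt hab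
  have hM : Real.sqrt (mS U * mS V) ≤ (mS (U + V) - mS U - mS V) / 2 := by linarith
  have h1 : ((mS (U + V) - mS U - mS V) / 2) ^ 2 ≥ mS U * mS V := by
    nlinarith [Real.sqrt_nonneg (mS U * mS V)]
  refine ⟨h1, ⟨fun _ => ?_, fun _ => h1⟩⟩
  have hsum : (Real.sqrt (mS U) + Real.sqrt (mS V)) ^ 2 ≤ mS (U + V) := by
    have h2 : Real.sqrt (mS U) ^ 2 = mS U := Real.sq_sqrt (le_of_lt hmU)
    have h3 : Real.sqrt (mS V) ^ 2 = mS V := Real.sq_sqrt (le_of_lt hmV)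
    have h4 : Real.sqrt (mS U * mS V) = Real.sqrt (mS U) * Real.sqrt (mS V) :=
      Real.sqrt_mul (le_of_lt hmU) _
    nlinarith
  calc Real.sqrt (mS U) + Real.sqrt (mS V)
      = Real.sqrt ((Real.sqrt (mS U) + Real.sqrt (mS V)) ^ 2) := by
        rw [Real.sqrt_sq (by positivity)]
    _ ≤ Real.sqrt (mS (U + V)) := Real.sqrt_le_sqrt hsum
end
end

section
/- With the inner product ⟨[U,V];[P,Q]⟩ = (1/4π²)(2·o([U,V])·o([P,Q]) − 2π(m(U+P)+m(V+Q)−m(U+Q)−m(V+P))) on X_S, the kernel elements k_φ = [2B, (π/2)I^φ] satisfy K(φ,ψ) := ⟨k_φ, k_ψ⟩ = 2 − (π/2)·sin|φ − ψ|, where B is the unit disc and I^φ the unit segment at angle φ. -/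
open MeasureTheory Pointwise Filter Set
noncomputable section
/-- The inner product of the classes `[U,V]` and `[P,Q]` in the Radstrom space. -/
def ipS (U V P Q : Set E2) : ℝ :=
  (1 / (4 * Real.pi ^ 2)) *
    (2 * (perim U - perim V) * (perim P - perim Q) -
      2 * Real.pi * (mS (U + P) + mS (V + Q) - mS (U + Q) - mS (V + P)))
/-- The closed unit disc. -/
def diskB : Set E2 := Metric.closedBall (0 : E2) 1
/-- The unit vector at angle `φ`. -/
def dirc (φ : ℝ) : E2 := (WithLp.equiv 2 (Fin 2 → ℝ)).symm ![Real.cos φ, Real.sin φ]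



lemma inner_E2 (x y : E2) : (inner ℝ x y : ℝ) = x 0 * y 0 + x 1 * y 1 := by
  simp [PiLp.inner_apply, Fin.sum_univ_two, RCLike.inner_apply]; ring

lemma perp_apply_0 (v : E2) : perp v 0 = -(v 1) := rfl
lemma perp_apply_1 (v : E2) : perp v 1 = v 0 := rfl

lemma norm_sq_E2 (x : E2) : ‖x‖^2 = x 0 ^ 2 + x 1 ^ 2 := by
  rw [← real_inner_self_eq_norm_sq, inner_E2]; ring

lemma inner_v_perp (v : E2) : (inner ℝ v (perp v) : ℝ) = 0 := by
  rw [inner_E2, perp_apply_0, perp_apply_1]; ring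

lemma norm_perp (v : E2) : ‖perp v‖ = ‖v‖ := by
  have := norm_sq_E2 (perp v)
  rw [perp_apply_0, perp_apply_1] at this
  have h2 := norm_sq_E2 v
  nlinarith [norm_nonneg v, norm_nonneg (perp v)]

variable {v : E2}

lemma unit_sq (hv : ‖v‖ = 1) : v 0 ^ 2 + v 1 ^ 2 = 1 := by
  rw [← norm_sq_E2, hv]; norm_num

/-- Orthonormal pair (v, perp v). -/
lemma orthonormal_pair (hv : ‖v‖ = 1) : Orthonormal ℝ ![v, perp v] := by
  have h := unit_sq hv
  rw [orthonormal_iff_ite]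
  intro i j
  fin_cases i <;> fin_cases j <;>
    simp [inner_E2, perp_apply_0, perp_apply_1, norm_perp, hv] <;> nlinarith [h]

def onb (hv : ‖v‖ = 1) : OrthonormalBasis (Fin 2) ℝ E2 :=
  (basisOfOrthonormalOfCardEqFinrank (orthonormal_pair hv)
    (by simp [finrank_euclideanSpace_fin])).toOrthonormalBasis
    (by rw [coe_basisOfOrthonormalOfCardEqFinrank]; exact orthonormal_pair hv)

lemma onb_0 (hv : ‖v‖ = 1) : onb hv 0 = v := by
  simp [onb, Module.Basis.coe_toOrthonormalBasis, coe_basisOfOrthonormalOfCardEqFinrank]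

lemma onb_1 (hv : ‖v‖ = 1) : onb hv 1 = perp v := by
  simp [onb, Module.Basis.coe_toOrthonormalBasis, coe_basisOfOrthonormalOfCardEqFinrank]

/-- decomposition of any x in the frame (v, perp v) -/
lemma decomp (hv : ‖v‖ = 1) (x : E2) :
    x = (inner ℝ v x : ℝ) • v + (inner ℝ (perp v) x : ℝ) • perp v := by
  have h := (onb hv).sum_repr x
  rw [Fin.sum_univ_two] at h
  rw [(onb hv).repr_apply_apply, (onb hv).repr_apply_apply, onb_0, onb_1] at h
  exact h.symm
lemma E2_vol_closedBall (r : ℝ) (hr : 0 ≤ r) :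
    volume (Metric.closedBall (0 : E2) r) = ENNReal.ofReal (Real.pi * r ^ 2) := by
  rw [EuclideanSpace.volume_closedBall]
  simp only [Fintype.card_fin]
  rw [show ((2:ℕ) : ℝ)/2 + 1 = 2 by norm_num, Real.Gamma_two,
    Real.sq_sqrt Real.pi_nonneg]
  rw [← ENNReal.ofReal_pow hr, ← ENNReal.ofReal_mul (by positivity)]
  ring_nf
def box (d e : ℝ) : Set E2 := {x | x 0 ∈ Icc (-d) d ∧ x 1 ∈ Icc (-e) e}

lemma volume_box (d e : ℝ) : volume (box d e) = ENNReal.ofReal (2*d) * ENNReal.ofReal (2*e) := by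
  have : box d e = ((MeasurableEquiv.toLp 2 (Fin 2 → ℝ)).symm) ⁻¹'
      (Set.univ.pi ![Icc (-d) d, Icc (-e) e]) := by
    ext x
    simp [box, MeasurableEquiv.toLp, Set.mem_pi, Fin.forall_fin_two]; exact Iff.rfl
  rw [this, MeasurePreserving.measure_preimage
    (EuclideanSpace.volume_preserving_symm_measurableEquiv_toLp (Fin 2))]
  · rw [volume_pi_pi]
    rw [Fin.prod_univ_two]
    simp [Real.volume_Icc]
    congr 1 <;> ring_nf <;> simp [ENNReal.ofReal_mul']
  · refine (MeasurableSet.univ_pi fun i => ?_).nullMeasurableSet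
    fin_cases i <;> simp [measurableSet_Icc]

def lmap2 (v w : E2) : E2 →ₗ[ℝ] E2 :=
  ((EuclideanSpace.basisFun (Fin 2) ℝ).toBasis).constr ℝ ![v, w]

lemma lmap2_apply (v w : E2) (x : E2) : lmap2 v w x = x 0 • v + x 1 • w := by
  rw [lmap2, Module.Basis.constr_apply_fintype, Fin.sum_univ_two]
  simp [Module.Basis.equivFun_apply, OrthonormalBasis.coe_toBasis_repr_apply,
    EuclideanSpace.basisFun_repr]

lemma lmap2_det (v w : E2) : LinearMap.det (lmap2 v w) = v 0 * w 1 - w 0 * v 1 := by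
  rw [← LinearMap.det_toMatrix ((EuclideanSpace.basisFun (Fin 2) ℝ).toBasis) (lmap2 v w),
    Matrix.det_fin_two]
  simp only [LinearMap.toMatrix_apply, OrthonormalBasis.coe_toBasis_repr_apply,
    EuclideanSpace.basisFun_repr, OrthonormalBasis.coe_toBasis]
  simp [lmap2_apply, EuclideanSpace.single_apply]

lemma seg_add_seg (v w : E2) (d e : ℝ) :
    seg v d + seg w e = lmap2 v w '' box d e := by
  ext x
  constructor
  · rintro ⟨-, ⟨s, hs, rfl⟩, -, ⟨t, ht, rfl⟩, rfl⟩
    refine ⟨(WithLp.equiv 2 (Fin 2 → ℝ)).symm ![s, t], ⟨?_, ?_⟩, ?_⟩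
    · simpa using hs
    · simpa using ht
    · rw [lmap2_apply]; rfl
  · rintro ⟨y, ⟨h0, h1⟩, rfl⟩
    rw [lmap2_apply]
    exact ⟨y 0 • v, ⟨y 0, h0, rfl⟩, y 1 • w, ⟨y 1, h1, rfl⟩, rfl⟩

lemma vol_seg_add_seg (v w : E2) (d e : ℝ) (hd : 0 ≤ d) (he : 0 ≤ e) :
    volume (seg v d + seg w e) =
      ENNReal.ofReal (|v 0 * w 1 - w 0 * v 1| * ((2*d)*(2*e))) := by
  rw [seg_add_seg, Measure.addHaar_image_linearMap, lmap2_det, volume_box,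
    ← ENNReal.ofReal_mul (show (0:ℝ) ≤ 2*d by positivity),
    ← ENNReal.ofReal_mul (abs_nonneg _)]

-- stadium
section Stadium
variable {v : E2}

lemma norm_sq_coords (hv : ‖v‖ = 1) (x : E2) :
    ‖x‖^2 = (inner ℝ v x : ℝ)^2 + (inner ℝ (perp v) x : ℝ)^2 := by
  have h := norm_sq_E2 ((onb hv).repr x)
  rw [LinearIsometryEquiv.norm_map] at h
  rw [h, (onb hv).repr_apply_apply, (onb hv).repr_apply_apply, onb_0, onb_1]

def Dp (v : E2) (r : ℝ) : Set E2 :=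
  Metric.closedBall (0 : E2) r ∩ {x | 0 ≤ (inner ℝ v x : ℝ)}
def Dm (v : E2) (r : ℝ) : Set E2 :=
  Metric.closedBall (0 : E2) r ∩ {x | (inner ℝ v x : ℝ) ≤ 0}

lemma hyperplane_null (hv : ‖v‖ = 1) (c : ℝ) :
    volume {x : E2 | (inner ℝ v x : ℝ) = c} = 0 := by
  have hvv : (inner ℝ v v : ℝ) = 1 := by
    rw [real_inner_self_eq_norm_sq, hv]; norm_num
  have hS : ((ℝ ∙ v)ᗮ : Submodule ℝ E2) ≠ ⊤ := by
    intro h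
    have : v ∈ ((ℝ ∙ v)ᗮ : Submodule ℝ E2) := h ▸ Submodule.mem_top
    rw [Submodule.mem_orthogonal_singleton_iff_inner_right] at this
    rw [this] at hvv; norm_num at hvv
  have key : {x : E2 | (inner ℝ v x : ℝ) = c} = (c • v) +ᵥ ((ℝ ∙ v)ᗮ : Set E2) := by
    ext x
    simp only [Set.mem_setOf_eq, Set.mem_vadd_set]
    constructor
    · intro hx
      refine ⟨x - c • v, ?_, by simp⟩
      rw [SetLike.mem_coe, Submodule.mem_orthogonal_singleton_iff_inner_right,
        inner_sub_right, real_inner_smul_right, hx, hvv]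
      ring
    · rintro ⟨y, hy, rfl⟩
      rw [SetLike.mem_coe, Submodule.mem_orthogonal_singleton_iff_inner_right] at hy
      simp only [vadd_eq_add, inner_add_right, real_inner_smul_right, hy, hvv]
      ring
  rw [key, measure_vadd]
  exact Measure.addHaar_submodule volume _ hS

lemma measurable_innerv (v : E2) : Measurable fun x : E2 => (inner ℝ v x : ℝ) :=
  (continuous_const.inner continuous_id).measurable

lemma halfdisc_vol (hv : ‖v‖ = 1) (r : ℝ) (hr : 0 ≤ r) :
    volume (Dp v r) + volume (Dm v r) = ENNReal.ofReal (Real.pi * r^2) := by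
  have hm : MeasurableSet (Dm v r) :=
    Metric.isClosed_closedBall.measurableSet.inter
      ((measurable_innerv v) measurableSet_Iic)
  have hu : Dp v r ∪ Dm v r = Metric.closedBall (0 : E2) r := by
    ext x
    simp only [Dp, Dm, Set.mem_union, Set.mem_inter_iff, Set.mem_setOf_eq]
    constructor
    · rintro (h | h) <;> exact h.1
    · intro h
      rcases le_total 0 (inner ℝ v x : ℝ) with h' | h'
      · exact Or.inl ⟨h, h'⟩
      · exact Or.inr ⟨h, h'⟩
  have hi : volume (Dp v r ∩ Dm v r) = 0 := by
    refine measure_mono_null (fun x hx => ?_) (hyperplane_null hv 0)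
    exact le_antisymm hx.2.2 hx.1.2
  rw [← measure_union_add_inter (Dp v r) hm, hi, add_zero, hu, E2_vol_closedBall r hr]

lemma inner_perp_v (v : E2) : (inner ℝ (perp v) v : ℝ) = 0 := by
  rw [inner_E2, perp_apply_0, perp_apply_1]; ring

lemma inner_self_one (hv : ‖v‖ = 1) : (inner ℝ v v : ℝ) = 1 := by
  rw [real_inner_self_eq_norm_sq, hv]; norm_num

lemma mem_rect_inner (hv : ‖v‖ = 1) {d r : ℝ} {x : E2}
    (hx : x ∈ seg v d + seg (perp v) r) : (inner ℝ v x : ℝ) ∈ Icc (-d) d := by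
  obtain ⟨-, ⟨s, hs, rfl⟩, -, ⟨u, hu, rfl⟩, rfl⟩ := hx
  rw [inner_add_right, real_inner_smul_right, real_inner_smul_right,
    inner_self_one hv, inner_v_perp v]
  simpa using hs

lemma mem_Dp_vadd_inner (hv : ‖v‖ = 1) {d r : ℝ} {x : E2}
    (hx : x ∈ (d • v) +ᵥ Dp v r) : d ≤ (inner ℝ v x : ℝ) := by
  obtain ⟨z, hz, rfl⟩ := hx
  simp only [vadd_eq_add]
  rw [inner_add_right, real_inner_smul_right, inner_self_one hv]
  have := hz.2
  simp only [Set.mem_setOf_eq] at this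
  linarith

lemma mem_Dm_vadd_inner (hv : ‖v‖ = 1) {d r : ℝ} {x : E2}
    (hx : x ∈ ((-d) • v) +ᵥ Dm v r) : (inner ℝ v x : ℝ) ≤ -d := by
  obtain ⟨z, hz, rfl⟩ := hx
  simp only [vadd_eq_add]
  rw [inner_add_right, real_inner_smul_right, inner_self_one hv]
  have := hz.2
  simp only [Set.mem_setOf_eq] at this
  linarith

lemma stadium_eq (hv : ‖v‖ = 1) {d r : ℝ} (hd : 0 ≤ d) (hr : 0 ≤ r) :
    seg v d + Metric.closedBall (0 : E2) r =
      (seg v d + seg (perp v) r) ∪ ((d • v) +ᵥ Dp v r) ∪ (((-d) • v) +ᵥ Dm v r) := by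
  have hp : ‖perp v‖ = 1 := by rw [norm_perp, hv]
  ext x
  constructor
  · rintro ⟨-, ⟨t, ht, rfl⟩, z, hz, rfl⟩
    rw [Metric.mem_closedBall, dist_zero_right] at hz
    simp only [Set.mem_Icc] at ht
    set a : ℝ := inner ℝ v (t • v + z) with ha
    set c : ℝ := inner ℝ (perp v) (t • v + z) with hc
    have hva : (inner ℝ v z : ℝ) = a - t := by
      rw [ha, inner_add_right, real_inner_smul_right, inner_self_one hv]; ring
    have hpc : (inner ℝ (perp v) z : ℝ) = c := by
      rw [hc, inner_add_right, real_inner_smul_right,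
        inner_perp_v v]; ring
    have hz2 : (a - t)^2 + c^2 ≤ r^2 := by
      have h1 := norm_sq_coords hv z
      rw [hva, hpc] at h1
      nlinarith [norm_nonneg z]
    rcases le_or_gt a d with had | had
    · rcases le_or_gt (-d) a with had' | had'
      · -- rectangle
        refine Or.inl (Or.inl ?_)
        have hxd := decomp hv (t • v + z)
        rw [← ha, ← hc] at hxd
        have hcr : c ∈ Icc (-r) r := by
          constructor <;> nlinarith
        exact ⟨a • v, ⟨a, ⟨had', had⟩, rfl⟩, c • perp v, ⟨c, hcr, rfl⟩, hxd.symm⟩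
      · -- left cap
        refine Or.inr ?_
        refine ⟨(t • v + z) - (-d) • v, ⟨?_, ?_⟩, by simp⟩
        · rw [Metric.mem_closedBall, dist_zero_right, ← Real.sqrt_sq hr,
            ← Real.sqrt_sq (norm_nonneg _)]
          apply Real.sqrt_le_sqrt
          have h1 := norm_sq_coords hv ((t • v + z) - (-d) • v)
          have h2 : (inner ℝ v ((t • v + z) - (-d) • v) : ℝ) = a + d := by
            rw [inner_sub_right, real_inner_smul_right, inner_self_one hv, ← ha]; ring
          have h3 : (inner ℝ (perp v) ((t • v + z) - (-d) • v) : ℝ) = c := by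
            rw [inner_sub_right, real_inner_smul_right,
              inner_perp_v v, ← hc]; ring
          rw [h1, h2, h3]
          nlinarith
        · simp only [Set.mem_setOf_eq]
          rw [inner_sub_right, real_inner_smul_right, inner_self_one hv, ← ha]
          nlinarith
    · -- right cap
      refine Or.inl (Or.inr ?_)
      refine ⟨(t • v + z) - d • v, ⟨?_, ?_⟩, by simp⟩
      · rw [Metric.mem_closedBall, dist_zero_right, ← Real.sqrt_sq hr,
          ← Real.sqrt_sq (norm_nonneg _)]
        apply Real.sqrt_le_sqrt
        have h1 := norm_sq_coords hv ((t • v + z) - d • v)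
        have h2 : (inner ℝ v ((t • v + z) - d • v) : ℝ) = a - d := by
          rw [inner_sub_right, real_inner_smul_right, inner_self_one hv, ← ha]; ring
        have h3 : (inner ℝ (perp v) ((t • v + z) - d • v) : ℝ) = c := by
          rw [inner_sub_right, real_inner_smul_right,
            inner_perp_v v, ← hc]; ring
        rw [h1, h2, h3]
        nlinarith
      · simp only [Set.mem_setOf_eq]
        rw [inner_sub_right, real_inner_smul_right, inner_self_one hv, ← ha]
        nlinarith
  · intro hx
    rcases hx with (hx | hx) | hx
    · obtain ⟨y, hy, u, ⟨s, hs, rfl⟩, rfl⟩ := hx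
      refine ⟨y, hy, s • perp v, ?_, rfl⟩
      rw [Metric.mem_closedBall, dist_zero_right, norm_smul, hp, mul_one,
        Real.norm_eq_abs]
      simp only [Set.mem_Icc] at hs
      rw [abs_le]; exact hs
    · obtain ⟨z, hz, rfl⟩ := hx
      exact ⟨d • v, ⟨d, ⟨by linarith, le_refl d⟩, rfl⟩, z, hz.1, rfl⟩
    · obtain ⟨z, hz, rfl⟩ := hx
      exact ⟨(-d) • v, ⟨-d, ⟨le_refl _, by linarith⟩, rfl⟩, z, hz.1, rfl⟩

end Stadium

section StadiumVol
variable {v : E2}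

lemma Dp_measurable (v : E2) (r : ℝ) : MeasurableSet (Dp v r) :=
  Metric.isClosed_closedBall.measurableSet.inter ((measurable_innerv v) measurableSet_Ici)
lemma Dm_measurable (v : E2) (r : ℝ) : MeasurableSet (Dm v r) :=
  Metric.isClosed_closedBall.measurableSet.inter ((measurable_innerv v) measurableSet_Iic)

lemma stadium_vol (hv : ‖v‖ = 1) {d r : ℝ} (hd : 0 ≤ d) (hr : 0 ≤ r) :
    volume (seg v d + Metric.closedBall (0 : E2) r) =
      ENNReal.ofReal (4*d*r) + ENNReal.ofReal (Real.pi * r^2) := by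
  rw [stadium_eq hv hd hr]
  set A := seg v d + seg (perp v) r with hA
  set B := (d • v) +ᵥ Dp v r with hB
  set C := ((-d) • v) +ᵥ Dm v r with hC
  have hmB : MeasurableSet B := (Dp_measurable v r).const_vadd _
  have hmC : MeasurableSet C := (Dm_measurable v r).const_vadd _
  have hBC : AEDisjoint volume (A ∪ B) C := by
    refine measure_mono_null (fun x hx => ?_) (hyperplane_null hv (-d))
    rcases hx with ⟨(hxA | hxB), hxC⟩
    · exact le_antisymm (mem_Dm_vadd_inner hv hxC) (mem_rect_inner hv hxA).1
    · have h1 := mem_Dp_vadd_inner hv hxB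
      have h2 := mem_Dm_vadd_inner hv hxC
      have : (inner ℝ v x : ℝ) = -d := by linarith
      exact this
  have hAB : AEDisjoint volume A B := by
    refine measure_mono_null (fun x hx => ?_) (hyperplane_null hv d)
    exact le_antisymm (mem_rect_inner hv hx.1).2 (mem_Dp_vadd_inner hv hx.2)
  rw [measure_union₀ hmC.nullMeasurableSet hBC, measure_union₀ hmB.nullMeasurableSet hAB]
  have hvolA : volume A = ENNReal.ofReal (4*d*r) := by
    rw [hA, vol_seg_add_seg v (perp v) d r hd hr, perp_apply_0, perp_apply_1]
    congr 1
    have := unit_sq hv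
    rw [show v 0 * v 0 - -v 1 * v 1 = v 0 ^2 + v 1 ^2 by ring, this]
    rw [abs_one]; ring
  rw [hvolA, hB, hC, measure_vadd, measure_vadd, add_assoc, halfdisc_vol hv r hr]

end StadiumVol


lemma dirc_0 (φ : ℝ) : dirc φ 0 = Real.cos φ := rfl
lemma dirc_1 (φ : ℝ) : dirc φ 1 = Real.sin φ := rfl
lemma norm_dirc (φ : ℝ) : ‖dirc φ‖ = 1 := by
  have h : ‖dirc φ‖^2 = 1 := by
    rw [norm_sq_E2, dirc_0, dirc_1]
    exact Real.cos_sq_add_sin_sq φ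
  rw [← Real.sqrt_sq (norm_nonneg (dirc φ)), h, Real.sqrt_one]

lemma mS_closedBall {r : ℝ} (hr : 0 ≤ r) :
    mS (Metric.closedBall (0 : E2) r) = Real.pi * r^2 := by
  rw [mS, E2_vol_closedBall r hr, ENNReal.toReal_ofReal (by positivity)]

lemma mS_stadium {v : E2} (hv : ‖v‖ = 1) {d r : ℝ} (hd : 0 ≤ d) (hr : 0 ≤ r) :
    mS (seg v d + Metric.closedBall (0 : E2) r) = 4*d*r + Real.pi*r^2 := by
  rw [mS, stadium_vol hv hd hr, ENNReal.toReal_add (by simp) (by simp),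
    ENNReal.toReal_ofReal (by positivity), ENNReal.toReal_ofReal (by positivity)]

lemma span_ne_top {v : E2} (hv : ‖v‖ = 1) : (ℝ ∙ v) ≠ (⊤ : Submodule ℝ E2) := by
  intro h
  have hp : perp v ∈ (ℝ ∙ v) := h ▸ Submodule.mem_top
  rw [Submodule.mem_span_singleton] at hp
  obtain ⟨a, ha⟩ := hp
  have h0 : (inner ℝ v (perp v) : ℝ) = a := by
    rw [← ha, real_inner_smul_right, inner_self_one hv, mul_one]
  rw [inner_v_perp v] at h0
  have hzero : perp v = 0 := by rw [← ha, ← h0, zero_smul]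
  have hn := norm_perp v
  rw [hzero, hv, norm_zero] at hn
  norm_num at hn

lemma vol_seg {v : E2} (hv : ‖v‖ = 1) (d : ℝ) : volume (seg v d) = 0 := by
  refine measure_mono_null (fun x hx => ?_) (Measure.addHaar_submodule volume _ (span_ne_top hv))
  obtain ⟨t, _, rfl⟩ := hx
  exact Submodule.mem_span_singleton.2 ⟨t, rfl⟩

lemma mS_seg {v : E2} (hv : ‖v‖ = 1) (d : ℝ) : mS (seg v d) = 0 := by
  rw [mS, vol_seg hv d, ENNReal.toReal_zero]

lemma mS_par (v w : E2) {d e : ℝ} (hd : 0 ≤ d) (he : 0 ≤ e) :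
    mS (seg v d + seg w e) = |v 0 * w 1 - w 0 * v 1| * ((2*d)*(2*e)) := by
  rw [mS, vol_seg_add_seg v w d e hd he, ENNReal.toReal_ofReal (by positivity)]

lemma smul_ball1 {t : ℝ} (ht : 0 ≤ t) :
    t • Metric.closedBall (0 : E2) 1 = Metric.closedBall (0 : E2) t := by
  rw [smul_closedBall t (0 : E2) zero_le_one, smul_zero, Real.norm_eq_abs,
    abs_of_nonneg ht, mul_one]

lemma cb_add_cb {r s : ℝ} (hr : 0 ≤ r) (hs : 0 ≤ s) :
    Metric.closedBall (0 : E2) r + Metric.closedBall (0 : E2) s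
      = Metric.closedBall (0 : E2) (r + s) := by
  rw [closedBall_add_closedBall hr hs, add_zero]

lemma perim_eq (U : Set E2) (c : ℝ)
    (h : ∀ t : ℝ, t ∈ Ioi (0:ℝ) →
      (mS (U + t • Metric.closedBall (0 : E2) 1) - mS U - t ^ 2 * Real.pi) / t = c) :
    perim U = c := by
  refine Tendsto.limUnder_eq ?_
  refine Tendsto.congr' ?_ tendsto_const_nhds
  exact eventually_nhdsWithin_of_forall fun t ht => (h t ht).symm

lemma perim_disk2 : perim ((2:ℝ) • diskB) = 4 * Real.pi := by
  have h2 : (2:ℝ) • diskB = Metric.closedBall (0 : E2) 2 := by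
    rw [diskB, smul_ball1 (by norm_num : (0:ℝ) ≤ 2)]
  refine perim_eq _ _ fun t ht => ?_
  rw [mem_Ioi] at ht
  rw [h2, smul_ball1 ht.le, cb_add_cb (by norm_num) ht.le,
    mS_closedBall (by positivity), mS_closedBall (by norm_num : (0:ℝ) ≤ 2)]
  field_simp
  ring

lemma perim_seg {v : E2} (hv : ‖v‖ = 1) {d : ℝ} (hd : 0 ≤ d) :
    perim (seg v d) = 4 * d := by
  refine perim_eq _ _ fun t ht => ?_
  rw [mem_Ioi] at ht
  rw [smul_ball1 ht.le, mS_stadium hv hd ht.le, mS_seg hv d]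
  field_simp
  ring


lemma sin_abs_sub {φ ψ : ℝ} (hφ : φ ∈ Set.Icc 0 Real.pi) (hψ : ψ ∈ Set.Icc 0 Real.pi) :
    |Real.cos φ * Real.sin ψ - Real.cos ψ * Real.sin φ| = Real.sin |φ - ψ| := by
  obtain ⟨hφ0, hφπ⟩ := hφ
  obtain ⟨hψ0, hψπ⟩ := hψ
  have key : Real.cos φ * Real.sin ψ - Real.cos ψ * Real.sin φ = Real.sin (ψ - φ) := by
    rw [Real.sin_sub]; ring
  rcases le_total φ ψ with h | h
  · rw [key, abs_of_nonneg (Real.sin_nonneg_of_nonneg_of_le_pi (by linarith) (by linarith)),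
      abs_sub_comm, abs_of_nonneg (by linarith : (0:ℝ) ≤ ψ - φ)]
  · rw [key, show ψ - φ = -(φ - ψ) by ring, Real.sin_neg,
      abs_neg, abs_of_nonneg (Real.sin_nonneg_of_nonneg_of_le_pi (by linarith) (by linarith)),
      abs_of_nonneg (by linarith : (0:ℝ) ≤ φ - ψ)]


/-- The reproducing kernel: for `k_φ = [2B, (π/2)·I^φ]` one has
`⟨k_φ, k_ψ⟩ = 2 - (π/2)·sin|φ - ψ|`. -/
theorem reproducing_kernel_formula (φ ψ : ℝ)
    (hφ : φ ∈ Set.Icc 0 Real.pi) (hψ : ψ ∈ Set.Icc 0 Real.pi) :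
    ipS ((2 : ℝ) • diskB) (seg (dirc φ) (Real.pi / 2))
        ((2 : ℝ) • diskB) (seg (dirc ψ) (Real.pi / 2)) =
      2 - (Real.pi / 2) * Real.sin |φ - ψ| := by
  have hd : (0:ℝ) ≤ Real.pi / 2 := by positivity
  have h2 : (0:ℝ) ≤ 2 := by norm_num
  have h2B : (2:ℝ) • diskB = Metric.closedBall (0 : E2) 2 := by
    rw [diskB, smul_ball1 h2]
  have hUP : mS ((2:ℝ) • diskB + (2:ℝ) • diskB) = Real.pi * 16 := by
    rw [h2B, cb_add_cb h2 h2, show (2:ℝ)+2 = 4 by norm_num, mS_closedBall (by norm_num)]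
    norm_num
  have hVQ : mS (seg (dirc φ) (Real.pi / 2) + seg (dirc ψ) (Real.pi / 2)) =
      Real.sin |φ - ψ| * (Real.pi * Real.pi) := by
    rw [mS_par (dirc φ) (dirc ψ) hd hd, dirc_0, dirc_0, dirc_1, dirc_1,
      sin_abs_sub hφ hψ]
    ring
  have hUQ : mS ((2:ℝ) • diskB + seg (dirc ψ) (Real.pi / 2)) = 8 * Real.pi := by
    rw [h2B, add_comm, mS_stadium (norm_dirc ψ) hd h2]
    ring
  have hVP : mS (seg (dirc φ) (Real.pi / 2) + (2:ℝ) • diskB) = 8 * Real.pi := by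
    rw [h2B, mS_stadium (norm_dirc φ) hd h2]
    ring
  have hpU : perim ((2:ℝ) • diskB) = 4 * Real.pi := perim_disk2
  have hpV : perim (seg (dirc φ) (Real.pi / 2)) = 2 * Real.pi := by
    rw [perim_seg (norm_dirc φ) hd]; ring
  have hpQ : perim (seg (dirc ψ) (Real.pi / 2)) = 2 * Real.pi := by
    rw [perim_seg (norm_dirc ψ) hd]; ring
  rw [ipS, hUP, hVQ, hUQ, hVP, hpU, hpV, hpQ]
  have hpi := Real.pi_ne_zero
  field_simp
  ring
end
end
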